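/- Let Δ be a flag complex of dimension r-1 and let r ≥ k > p > 0 be integers. Then f_{p-1}(Δ) ≥ C(r,p) · C(r,k)^{-p/k} · (f_{k-1}(Δ))^{p/k}, where C(a,b) denotes the binomial coefficient and the inequality is between real numbers. -/

import Mathlib

/-- The number of faces of `Δ` with exactly `i` vertices (i.e. `f_{i-1}(Δ)`). -/
def faceCount {V : Type*} [DecidableEq V] (Δ : Finset (Finset V)) (i : ℕ) : ℕ :=
  (Δ.filter fun s => s.card = i).card

/-- A flag complex: every finite set of vertices all of whose 2-element subsets
are faces is itself a face. -/
def IsFlag {V : Type*} [DecidableEq V] (Δ : Finset (Finset V)) : Prop :=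
  ∀ S : Finset V, (∀ v ∈ S, ({v} : Finset V) ∈ Δ) →
    (∀ a ∈ S, ∀ b ∈ S, a ≠ b → ({a, b} : Finset V) ∈ Δ) → S ∈ Δ

set_option maxHeartbeats 1000000
section
open Polynomial

namespace FR



lemma msum_nonneg {s : Multiset ℝ} (h : ∀ x ∈ s, 0 ≤ x) : 0 ≤ s.sum := by
  induction s using Multiset.induction with
  | empty => simp
  | cons a t ih =>
    rw [Multiset.sum_cons]
    have := h a (by simp)
    have := ih fun x hx => h x (by simp [hx])
    linarith

lemma msum_pos {s : Multiset ℝ} (h0 : s ≠ 0) (h : ∀ x ∈ s, 0 < x) : 0 < s.sum := by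
  induction s using Multiset.induction with
  | empty => simp at h0
  | cons a t _ =>
    rw [Multiset.sum_cons]
    have h1 := h a (by simp)
    have h2 : 0 ≤ t.sum := msum_nonneg fun x hx => le_of_lt (h x (by simp [hx]))
    linarith

lemma mprod_pos {s : Multiset ℝ} (h : ∀ x ∈ s, 0 < x) : 0 < s.prod := by
  induction s using Multiset.induction with
  | empty => simp
  | cons a t ih =>
    rw [Multiset.prod_cons]
    exact mul_pos (h a (by simp)) (ih fun x hx => h x (by simp [hx]))

lemma mprod_ne_zero {s : Multiset ℝ} (h : ∀ x ∈ s, x ≠ 0) : s.prod ≠ 0 := by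
  induction s using Multiset.induction with
  | empty => simp
  | cons a t ih =>
    rw [Multiset.prod_cons]
    exact mul_ne_zero (h a (by simp)) (ih fun x hx => h x (by simp [hx]))

lemma esymm_zero' (s : Multiset ℝ) : s.esymm 0 = 1 := by
  simp [Multiset.esymm, Multiset.powersetCard_zero_left]

lemma esymm_of_lt {s : Multiset ℝ} {j : ℕ} (hj : Multiset.card s < j) : s.esymm j = 0 := by
  simp [Multiset.esymm, Multiset.powersetCard_eq_empty _ hj]

lemma esymm_pos {s : Multiset ℝ} (h : ∀ x ∈ s, 0 < x) {j : ℕ} (hj : j ≤ Multiset.card s) :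
    0 < s.esymm j := by
  apply msum_pos
  · have hc : Multiset.card ((s.powersetCard j).map Multiset.prod)
        = (Multiset.card s).choose j := by
      rw [Multiset.card_map, Multiset.card_powersetCard]
    rw [← Multiset.card_pos, hc]
    exact Nat.choose_pos hj
  · intro x hx
    rw [Multiset.mem_map] at hx
    obtain ⟨t, ht, rfl⟩ := hx
    rw [Multiset.mem_powersetCard] at ht
    exact mprod_pos fun y hy => h y (Multiset.mem_of_le ht.1 hy)

lemma esymm_cons (a : ℝ) (s : Multiset ℝ) (n : ℕ) :
    (a ::ₘ s).esymm (n + 1) = s.esymm (n + 1) + a * s.esymm n := by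
  unfold Multiset.esymm
  rw [Multiset.powersetCard_cons, Multiset.map_add, Multiset.sum_add]
  congr 1
  rw [Multiset.map_map, ← Multiset.sum_map_mul_left]
  congr 1
  apply Multiset.map_congr rfl
  intro t _
  simp [Multiset.prod_cons]

lemma esymm_card (s : Multiset ℝ) : s.esymm (Multiset.card s) = s.prod := by
  induction s using Multiset.induction with
  | empty => simp [esymm_zero']
  | cons a t ih =>
    rw [Multiset.card_cons, esymm_cons, esymm_of_lt (by omega), ih, Multiset.prod_cons]
    ring

lemma esymm_inv (s : Multiset ℝ) (h0 : ∀ x ∈ s, x ≠ 0) :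
    ∀ j, j ≤ Multiset.card s →
      s.esymm (Multiset.card s - j) = s.prod * (s.map (·⁻¹)).esymm j := by
  induction s using Multiset.induction with
  | empty =>
    intro j hj
    simp only [Multiset.card_zero, Nat.le_zero] at hj
    subst hj
    simp [esymm_zero']
  | cons a t ih =>
    intro j hj
    have ha : a ≠ 0 := h0 a (by simp)
    have h0t : ∀ x ∈ t, x ≠ 0 := fun x hx => h0 x (by simp [hx])
    rw [Multiset.map_cons, Multiset.prod_cons]
    rcases Nat.eq_or_lt_of_le hj with hje | hjlt
    · -- j = card (a ::ₘ t)
      subst hje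
      rw [Nat.sub_self, esymm_zero']
      have hcm : Multiset.card (a ::ₘ t) = Multiset.card (a⁻¹ ::ₘ t.map (·⁻¹)) := by simp
      rw [hcm, esymm_card, Multiset.prod_cons]
      have hprodinv : (t.map (·⁻¹)).prod = t.prod⁻¹ := by
        simpa using (Multiset.prod_map_inv (m := t) (f := id))
      rw [hprodinv]
      field_simp
      exact (div_self (mprod_ne_zero h0t)).symm
    · have hjt : j ≤ Multiset.card t := by
        rw [Multiset.card_cons] at hjlt; omega
      have hc : Multiset.card (a ::ₘ t) - j = (Multiset.card t - j) + 1 := by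
        rw [Multiset.card_cons]; omega
      rw [hc, esymm_cons]
      cases j with
      | zero =>
        rw [esymm_zero', Nat.sub_zero, esymm_of_lt (by omega), esymm_card]
        ring
      | succ i =>
        rw [esymm_cons]
        have e1 := ih h0t (i + 1) hjt
        have e2 := ih h0t i (le_trans (Nat.le_succ i) hjt)
        have harr : (Multiset.card t - (i + 1)) + 1 = Multiset.card t - i := by omega
        rw [harr, e1, e2]
        field_simp
        ring

lemma esymm_one' (s : Multiset ℝ) : s.esymm 1 = s.sum := by
  induction s using Multiset.induction with
  | empty =>
    rw [show (1:ℕ) = 0 + 1 from rfl]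
    simp [Multiset.esymm, Multiset.powersetCard_eq_empty 1 (s := (0 : Multiset ℝ)) (by simp)]
  | cons a t ih =>
    rw [show (1:ℕ) = 0 + 1 from rfl] at ih ⊢
    rw [esymm_cons, ih, esymm_zero', Multiset.sum_cons]
    ring

lemma two_esymm_two (s : Multiset ℝ) :
    2 * s.esymm 2 = s.sum ^ 2 - (s.map (· ^ 2)).sum := by
  induction s using Multiset.induction with
  | empty =>
    simp [esymm_of_lt (show Multiset.card (0 : Multiset ℝ) < 2 by simp)]
  | cons a t ih =>
    rw [show (2:ℕ) = 1 + 1 from rfl, esymm_cons, esymm_one', Multiset.sum_cons,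
      Multiset.map_cons, Multiset.sum_cons]
    rw [show (1+1 : ℕ) = 2 from rfl]
    linear_combination ih

lemma sum_sq_le (s : Multiset ℝ) :
    s.sum ^ 2 ≤ (Multiset.card s : ℝ) * (s.map (· ^ 2)).sum := by
  induction s using Multiset.induction with
  | empty => simp
  | cons a t ih =>
    rw [Multiset.sum_cons, Multiset.map_cons, Multiset.sum_cons, Multiset.card_cons]
    push_cast
    have h1 : 0 ≤ (t.map (· ^ 2)).sum := by
      apply msum_nonneg
      intro x hx
      rw [Multiset.mem_map] at hx
      obtain ⟨y, _, rfl⟩ := hx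
      positivity
    rcases eq_or_ne t 0 with rfl | ht
    · simp
    · have hm1 : (1:ℝ) ≤ (Multiset.card t : ℝ) := by
        have : 1 ≤ Multiset.card t := by
          rwa [Nat.one_le_iff_ne_zero, ne_eq, Multiset.card_eq_zero]
        exact_mod_cast this
      nlinarith [ih, sq_nonneg ((Multiset.card t : ℝ) * a - t.sum), sq_nonneg t.sum,
        mul_le_mul_of_nonneg_left ih (le_of_lt (lt_of_lt_of_le zero_lt_one hm1))]

lemma newton_base (s : Multiset ℝ) :
    s.esymm 0 * s.esymm 2 * ((Multiset.card s).choose 1 : ℝ) ^ 2 ≤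
      s.esymm 1 ^ 2 * ((Multiset.card s).choose 0 : ℝ) * ((Multiset.card s).choose 2 : ℝ) := by
  rcases Nat.lt_or_ge (Multiset.card s) 2 with hlt | hge
  · rw [esymm_of_lt hlt]
    simp only [mul_zero, zero_mul]
    positivity
  · rw [esymm_zero', esymm_one', Nat.choose_zero_right, Nat.choose_one_right]
    push_cast
    have h2 : 2 * (Multiset.card s).choose 2 = Multiset.card s * (Multiset.card s - 1) := by
      have h := Nat.choose_succ_right_eq (Multiset.card s) 1
      rw [Nat.choose_one_right] at h
      norm_num at h
      omega
    have h2' : 2 * ((Multiset.card s).choose 2 : ℝ)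
        = (Multiset.card s : ℝ) * ((Multiset.card s : ℝ) - 1) := by
      have hcast : ((Multiset.card s * (Multiset.card s - 1) : ℕ) : ℝ)
          = (Multiset.card s : ℝ) * ((Multiset.card s : ℝ) - 1) := by
        have : (((Multiset.card s - 1 : ℕ)) : ℝ) = (Multiset.card s : ℝ) - 1 := by
          have : 1 ≤ Multiset.card s := by omega
          push_cast [this]
          ring
        rw [Nat.cast_mul, this]
      rw [← hcast, ← h2]
      push_cast
      ring
    have hid := two_esymm_two s
    have hsq := sum_sq_le s
    have hmn : (0:ℝ) ≤ (Multiset.card s : ℝ) := by positivity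
    have hQ : s.sum ^ 2 * (2 * ((Multiset.card s).choose 2 : ℝ))
        = s.sum ^ 2 * ((Multiset.card s : ℝ) ^ 2 - (Multiset.card s : ℝ)) := by
      linear_combination s.sum ^ 2 * h2'
    have hE : 2 * (s.esymm 2 * (Multiset.card s : ℝ) ^ 2)
        = (s.sum ^ 2 - (s.map (· ^ 2)).sum) * (Multiset.card s : ℝ) ^ 2 := by
      linear_combination (Multiset.card s : ℝ) ^ 2 * hid
    nlinarith [hQ, hE, mul_le_mul_of_nonneg_left hsq hmn, sq_nonneg s.sum, hsq]

lemma deriv_esymm (S : Multiset ℝ) (hS : Multiset.card S ≠ 0) :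
    ∃ Z : Multiset ℝ, Multiset.card Z = Multiset.card S - 1 ∧
      ∀ i, i ≤ Multiset.card S - 1 →
        (Multiset.card S : ℝ) * Z.esymm i = ((Multiset.card S - i : ℕ) : ℝ) * S.esymm i := by
  have hm1 : 1 ≤ Multiset.card S := Nat.one_le_iff_ne_zero.mpr hS
  set m := Multiset.card S with hm
  set T := S.map (fun a => -a) with hT
  have hTc : Multiset.card T = m := by rw [hT, Multiset.card_map]
  set f := (T.map (fun a => X - C a)).prod with hf
  have hf2 : f = (S.map (fun a => X + C a)).prod := by
    rw [hf, hT, Multiset.map_map]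
    congr 1
    apply Multiset.map_congr rfl
    intro a _
    simp [sub_neg_eq_add]
  have hmono : f.Monic := monic_multiset_prod_of_monic _ _ (fun a _ => monic_X_sub_C a)
  have hdeg : f.natDegree = m := by
    rw [hf, natDegree_multiset_prod_of_monic _
      (by intro g hg; rw [Multiset.mem_map] at hg; obtain ⟨a, _, rfl⟩ := hg
          exact monic_X_sub_C a)]
    rw [Multiset.map_map]
    rw [show (natDegree ∘ fun a : ℝ => (X : ℝ[X]) - C a) = fun _ : ℝ => 1 from
      funext fun a => natDegree_X_sub_C a]
    simp [hTc]
  have hroots : f.roots = T := by rw [hf]; exact roots_multiset_prod_X_sub_C T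
  have hcoef : (derivative f).coeff (m - 1) = (m : ℝ) := by
    rw [coeff_derivative]
    have harr : m - 1 + 1 = m := by omega
    rw [harr]
    have h1 : f.coeff m = 1 := by
      have := hmono.coeff_natDegree
      rwa [hdeg] at this
    rw [h1, one_mul]
    have h2 := Nat.cast_sub (R := ℝ) hm1
    rw [Nat.cast_one] at h2
    rw [h2]
    ring
  have hmne : (m : ℝ) ≠ 0 := Nat.cast_ne_zero.mpr hS
  have hdeg' : (derivative f).natDegree = m - 1 := by
    apply le_antisymm
    · simpa [hdeg] using natDegree_derivative_le f
    · exact le_natDegree_of_ne_zero (by rw [hcoef]; exact hmne)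
  have hle := f.card_roots_le_derivative
  rw [hroots, hTc] at hle
  have hcard' : Multiset.card (derivative f).roots = m - 1 := by
    have h1 : Multiset.card (derivative f).roots ≤ m - 1 := by
      have := (derivative f).card_roots'
      omega
    omega
  have hsplit : Splits (derivative f) :=
    splits_iff_card_roots.mpr (by rw [hcard', hdeg'])
  have hlead : (derivative f).leadingCoeff = (m : ℝ) := by
    rw [Polynomial.leadingCoeff, hdeg']
    exact hcoef
  have heq := hsplit.eq_prod_roots
  refine ⟨(derivative f).roots.map (fun a => -a), by rw [Multiset.card_map, hcard'], ?_⟩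
  intro i hi
  set Z := (derivative f).roots.map (fun a => -a) with hZ
  have hZc : Multiset.card Z = m - 1 := by rw [hZ, Multiset.card_map, hcard']
  have heq2 : derivative f = C (m : ℝ) * (Z.map (fun a => X + C a)).prod := by
    rw [heq, hlead]
    congr 1
    rw [hZ, Multiset.map_map]
    congr 1
    apply Multiset.map_congr rfl
    intro a _
    simp [sub_eq_add_neg]
  have e1 : (derivative f).coeff ((m - 1) - i) = (m : ℝ) * Z.esymm i := by
    rw [heq2, coeff_C_mul, Multiset.prod_X_add_C_coeff _ (by rw [hZc]; omega)]
    congr 2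
    rw [hZc]
    omega
  have e2 : (derivative f).coeff ((m - 1) - i) = ((m - i : ℕ) : ℝ) * S.esymm i := by
    rw [coeff_derivative]
    have harr : (m - 1) - i + 1 = m - i := by omega
    rw [harr, hf2, Multiset.prod_X_add_C_coeff _ (by rw [← hm]; omega)]
    rw [show Multiset.card S - (m - i) = i from by rw [← hm]; omega]
    have hcast : (((m - 1) - i : ℕ) : ℝ) + 1 = ((m - i : ℕ) : ℝ) := by
      rw [← Nat.cast_add_one, harr]
    rw [hcast]
    ring
  rw [← e1, e2]

lemma chooseId (m j : ℕ) (h : j < m) :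
    (m - j) * m.choose j = m * (m - 1).choose j := by
  have h1 := Nat.add_one_mul_choose_eq (m - 1) j
  have h2 := Nat.choose_succ_right_eq m j
  have hm : m - 1 + 1 = m := by omega
  simp only [Nat.succ_eq_add_one, hm] at h1
  rw [Nat.mul_comm (m - j) (m.choose j)]
  exact (h1.trans h2).symm

theorem newton : ∀ (n : ℕ) (S : Multiset ℝ), Multiset.card S = n → ∀ i : ℕ, i + 2 ≤ n →
    S.esymm i * S.esymm (i + 2) * (n.choose (i + 1) : ℝ) ^ 2 ≤
      S.esymm (i + 1) ^ 2 * (n.choose i : ℝ) * (n.choose (i + 2) : ℝ) := by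
  intro n
  induction n using Nat.strong_induction_on with
  | _ n ih =>
    intro S hSn i hi
    rcases Nat.eq_zero_or_pos i with rfl | hipos
    · have := newton_base S
      rw [hSn] at this
      simpa using this
    rcases eq_or_lt_of_le hi with htop | hlt
    · -- top case : i + 2 = n
      by_cases h0 : ∃ x ∈ S, x = 0
      · obtain ⟨x, hx, rfl⟩ := h0
        have hprod : S.esymm (i + 2) = 0 := by
          rw [show i + 2 = Multiset.card S from by omega, esymm_card]
          exact Multiset.prod_eq_zero hx
        rw [hprod]
        have : (0:ℝ) ≤ S.esymm (i + 1) ^ 2 * (n.choose i : ℝ) * (n.choose (i + 2) : ℝ) := by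
          positivity
        nlinarith [this]
      · push_neg at h0
        set T := S.map (·⁻¹) with hTdef
        have hTc : Multiset.card T = n := by rw [hTdef, Multiset.card_map, hSn]
        have e0 := esymm_inv S h0 0 (by omega)
        have e1 := esymm_inv S h0 1 (by omega)
        have e2 := esymm_inv S h0 2 (by omega)
        rw [hSn] at e0 e1 e2
        rw [show n - 0 = i + 2 from by omega] at e0
        rw [show n - 1 = i + 1 from by omega] at e1
        rw [show n - 2 = i from by omega] at e2
        rw [esymm_zero'] at e0
        have hbase := newton_base T
        rw [hTc, esymm_zero'] at hbase
        -- rewrite the choose's : n.choose (i+1) = n.choose 1 = n etc.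
        have hc1 : n.choose (i + 1) = n.choose 1 := by
          rw [show i + 1 = n - 1 from by omega, Nat.choose_symm (by omega)]
        have hc2 : n.choose i = n.choose 2 := by
          rw [show i = n - 2 from by omega, Nat.choose_symm (by omega)]
        have hc3 : n.choose (i + 2) = n.choose 0 := by
          rw [show i + 2 = n - 0 from by omega, Nat.choose_symm (by omega)]
        rw [hc1, hc2, hc3, e0, e1, e2]
        rw [Nat.choose_zero_right] at hbase ⊢
        rw [Nat.choose_one_right] at hbase ⊢
        push_cast at hbase ⊢
        have hsq : (0:ℝ) ≤ S.prod ^ 2 := sq_nonneg _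
        nlinarith [mul_le_mul_of_nonneg_left hbase hsq]
    · -- middle case : i + 2 < n
      obtain ⟨Z, hZc, hZe⟩ := deriv_esymm S (by omega)
      rw [hSn] at hZc hZe
      have ihZ := ih (n - 1) (by omega) Z hZc i (by omega)
      have r1 := hZe i (by omega)
      have r2 := hZe (i + 1) (by omega)
      have r3 := hZe (i + 2) (by omega)
      -- choose identities
      have c1 : ((n - i : ℕ) : ℝ) * (n.choose i : ℝ) = (n : ℝ) * ((n - 1).choose i : ℝ) := by
        exact_mod_cast congrArg (Nat.cast : ℕ → ℝ) (chooseId n i (by omega))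
      have c2 : ((n - (i + 1) : ℕ) : ℝ) * (n.choose (i + 1) : ℝ)
          = (n : ℝ) * ((n - 1).choose (i + 1) : ℝ) := by
        exact_mod_cast congrArg (Nat.cast : ℕ → ℝ) (chooseId n (i + 1) (by omega))
      have c3 : ((n - (i + 2) : ℕ) : ℝ) * (n.choose (i + 2) : ℝ)
          = (n : ℝ) * ((n - 1).choose (i + 2) : ℝ) := by
        exact_mod_cast congrArg (Nat.cast : ℕ → ℝ) (chooseId n (i + 2) (by omega))
      -- abbreviations
      set u0 : ℝ := ((n - i : ℕ) : ℝ) with hu0d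
      set u1 : ℝ := ((n - (i + 1) : ℕ) : ℝ) with hu1d
      set u2 : ℝ := ((n - (i + 2) : ℕ) : ℝ) with hu2d
      have hu0 : 0 < u0 := by rw [hu0d]; exact_mod_cast Nat.sub_pos_of_lt (by omega)
      have hu1 : 0 < u1 := by rw [hu1d]; exact_mod_cast Nat.sub_pos_of_lt (by omega)
      have hu2 : 0 < u2 := by rw [hu2d]; exact_mod_cast Nat.sub_pos_of_lt (by omega)
      have hstep := mul_le_mul_of_nonneg_left ihZ (show (0:ℝ) ≤ (n:ℝ) ^ 4 by positivity)
      have eL : (n:ℝ) ^ 4 * (Z.esymm i * Z.esymm (i + 2) * (((n-1).choose (i + 1) : ℕ) : ℝ) ^ 2)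
          = (u0 * u2 * u1 ^ 2) *
            (S.esymm i * S.esymm (i + 2) * ((n.choose (i + 1) : ℕ) : ℝ) ^ 2) := by
        calc (n:ℝ) ^ 4 * (Z.esymm i * Z.esymm (i + 2) * (((n-1).choose (i + 1) : ℕ) : ℝ) ^ 2)
            = ((n:ℝ) * Z.esymm i) * ((n:ℝ) * Z.esymm (i + 2)) *
              ((n:ℝ) * (((n-1).choose (i + 1) : ℕ) : ℝ)) ^ 2 := by ring
          _ = (u0 * S.esymm i) * (u2 * S.esymm (i + 2)) *
              (u1 * ((n.choose (i + 1) : ℕ) : ℝ)) ^ 2 := by rw [r1, r3, ← c2]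
          _ = (u0 * u2 * u1 ^ 2) *
              (S.esymm i * S.esymm (i + 2) * ((n.choose (i + 1) : ℕ) : ℝ) ^ 2) := by ring
      have eR : (n:ℝ) ^ 4 * (Z.esymm (i + 1) ^ 2 * (((n-1).choose i : ℕ) : ℝ) *
            (((n-1).choose (i + 2) : ℕ) : ℝ))
          = (u0 * u2 * u1 ^ 2) *
            (S.esymm (i + 1) ^ 2 * ((n.choose i : ℕ) : ℝ) * ((n.choose (i + 2) : ℕ) : ℝ)) := by
        calc (n:ℝ) ^ 4 * (Z.esymm (i + 1) ^ 2 * (((n-1).choose i : ℕ) : ℝ) *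
              (((n-1).choose (i + 2) : ℕ) : ℝ))
            = ((n:ℝ) * Z.esymm (i + 1)) ^ 2 * ((n:ℝ) * (((n-1).choose i : ℕ) : ℝ)) *
              ((n:ℝ) * (((n-1).choose (i + 2) : ℕ) : ℝ)) := by ring
          _ = (u1 * S.esymm (i + 1)) ^ 2 * (u0 * ((n.choose i : ℕ) : ℝ)) *
              (u2 * ((n.choose (i + 2) : ℕ) : ℝ)) := by rw [r2, ← c1, ← c3]
          _ = (u0 * u2 * u1 ^ 2) *
              (S.esymm (i + 1) ^ 2 * ((n.choose i : ℕ) : ℝ) * ((n.choose (i + 2) : ℕ) : ℝ)) := by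
              ring
      rw [eL, eR] at hstep
      exact le_of_mul_le_mul_left hstep (by positivity)

theorem maclaurin (S : Multiset ℝ) (hpos : ∀ x ∈ S, 0 < x) (a b : ℕ) (ha : 1 ≤ a)
    (hab : a ≤ b) (hb : b ≤ Multiset.card S) :
    S.esymm b ^ a * ((Multiset.card S).choose a : ℝ) ^ b ≤
      S.esymm a ^ b * ((Multiset.card S).choose b : ℝ) ^ a := by
  set m := Multiset.card S with hm
  have hcpos : ∀ j, j ≤ m → (0:ℝ) < (m.choose j : ℝ) := fun j hj =>
    Nat.cast_pos.mpr (Nat.choose_pos hj)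
  set P : ℕ → ℝ := fun j => S.esymm j / (m.choose j : ℝ) with hP
  have hPpos : ∀ j, j ≤ m → 0 < P j := by
    intro j hj
    simp only [hP]
    exact div_pos (esymm_pos hpos (by omega)) (hcpos j hj)
  set q : ℕ → ℝ := fun j => P (j + 1) / P j with hq
  have hqpos : ∀ j, j + 1 ≤ m → 0 < q j := by
    intro j hj
    simp only [hq]
    exact div_pos (hPpos _ hj) (hPpos _ (by omega))
  have tele : ∀ j, j ≤ m → P j = ∏ t ∈ Finset.range j, q t := by
    intro j
    induction j with
    | zero =>
      intro _
      simp [hP, esymm_zero']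
    | succ j ihj =>
      intro hj
      rw [Finset.prod_range_succ, ← ihj (by omega)]
      simp only [hq]
      rw [eq_comm, mul_comm]
      exact div_mul_cancel₀ _ (ne_of_gt (hPpos j (by omega)))
  have hmono : ∀ j, j + 2 ≤ m → q (j + 1) ≤ q j := by
    intro j hj
    have hN := newton m S hm.symm j hj
    have h1 := hPpos j (by omega)
    have h2 := hPpos (j + 1) (by omega)
    have h3 := hPpos (j + 2) (by omega)
    simp only [hq]
    rw [div_le_div_iff₀ h2 h1]
    simp only [hP]
    rw [div_mul_div_comm, div_mul_div_comm,
      div_le_div_iff₀ (mul_pos (hcpos _ (by omega)) (hcpos _ (by omega)))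
        (mul_pos (hcpos _ (by omega)) (hcpos _ (by omega)))]
    nlinarith [hN]
  have hmono' : ∀ i j, j ≤ i → i + 1 ≤ m → q i ≤ q j := by
    intro i
    induction i with
    | zero =>
      intro j hj _
      have : j = 0 := by omega
      subst this
      exact le_refl _
    | succ i ihi =>
      intro j hj him
      rcases Nat.eq_or_lt_of_le hj with rfl | hlt
      · exact le_refl _
      · exact le_trans (hmono i (by omega)) (ihi j (by omega) (by omega))
  have key : P b ^ a ≤ P a ^ b := by
    obtain ⟨a', rfl⟩ : ∃ a', a = a' + 1 := ⟨a - 1, by omega⟩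
    have hsplit : ∏ t ∈ Finset.range b, q t
        = (∏ t ∈ Finset.range (a' + 1), q t) * ∏ t ∈ Finset.Ico (a' + 1) b, q t := by
      rw [Finset.range_eq_Ico, Finset.range_eq_Ico]
      exact (Finset.prod_Ico_consecutive _ (Nat.zero_le _) hab).symm
    rw [tele _ hb, tele _ (le_trans hab hb), hsplit]
    set A := ∏ t ∈ Finset.range (a' + 1), q t with hA
    set B := ∏ t ∈ Finset.Ico (a' + 1) b, q t with hB
    set Q := q a' with hQd
    have hQpos : 0 < Q := hqpos a' (by omega)
    have hApos : 0 < A := by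
      rw [hA]
      exact Finset.prod_pos fun i hi => hqpos i (by simp only [Finset.mem_range] at hi; omega)
    have hBpos : 0 < B := by
      rw [hB]
      exact Finset.prod_pos fun i hi =>
        hqpos i (by simp only [Finset.mem_Ico] at hi; omega)
    have hBle : B ≤ Q ^ (b - (a' + 1)) := by
      rw [hB]
      calc ∏ t ∈ Finset.Ico (a' + 1) b, q t ≤ ∏ t ∈ Finset.Ico (a' + 1) b, Q := by
            apply Finset.prod_le_prod
            · intro i hi
              exact le_of_lt (hqpos i (by simp only [Finset.mem_Ico] at hi; omega))
            · intro i hi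
              simp only [Finset.mem_Ico] at hi
              exact hmono' i a' (by omega) (by omega)
        _ = Q ^ (b - (a' + 1)) := by rw [Finset.prod_const, Nat.card_Ico]
    have hAge : Q ^ (a' + 1) ≤ A := by
      rw [hA]
      calc Q ^ (a' + 1) = ∏ _t ∈ Finset.range (a' + 1), Q := by
            rw [Finset.prod_const, Finset.card_range]
        _ ≤ ∏ t ∈ Finset.range (a' + 1), q t := by
            apply Finset.prod_le_prod
            · intro i _
              exact le_of_lt hQpos
            · intro i hi
              simp only [Finset.mem_range] at hi
              exact hmono' a' i (by omega) (by omega)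
    calc (A * B) ^ (a' + 1) = A ^ (a' + 1) * B ^ (a' + 1) := mul_pow _ _ _
      _ ≤ A ^ (a' + 1) * (Q ^ (b - (a' + 1))) ^ (a' + 1) := by
          exact mul_le_mul_of_nonneg_left
            (pow_le_pow_left₀ (le_of_lt hBpos) hBle _) (by positivity)
      _ = A ^ (a' + 1) * (Q ^ (a' + 1)) ^ (b - (a' + 1)) := by
          rw [← pow_mul, ← pow_mul, Nat.mul_comm]
      _ ≤ A ^ (a' + 1) * A ^ (b - (a' + 1)) := by
          exact mul_le_mul_of_nonneg_left
            (pow_le_pow_left₀ (by positivity) hAge _) (by positivity)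
      _ = A ^ b := by rw [← pow_add]; congr 1; omega
  have hca := hcpos a (le_trans hab hb)
  have hcb := hcpos b hb
  simp only [hP] at key
  rw [div_pow, div_pow, div_le_div_iff₀ (pow_pos hcb a) (pow_pos hca b)] at key
  exact key

lemma amgm_pow (y z : ℝ) (hy : 0 ≤ y) (hz : 0 ≤ z) (c d : ℕ) (hcd : 0 < c + d) :
    y ^ c * z ^ d ≤ (((c : ℝ) * y + (d : ℝ) * z) / ((c : ℝ) + (d : ℝ))) ^ (c + d) := by
  have hcd' : (0:ℝ) < (c : ℝ) + (d : ℝ) := by exact_mod_cast hcd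
  have hw1 : (0:ℝ) ≤ (c : ℝ) / ((c : ℝ) + (d : ℝ)) := by positivity
  have hw2 : (0:ℝ) ≤ (d : ℝ) / ((c : ℝ) + (d : ℝ)) := by positivity
  have hsum : (c : ℝ) / ((c : ℝ) + (d : ℝ)) + (d : ℝ) / ((c : ℝ) + (d : ℝ)) = 1 := by
    field_simp
  have h := Real.geom_mean_le_arith_mean2_weighted hw1 hw2 hy hz hsum
  have hA : (c : ℝ) / ((c : ℝ) + (d : ℝ)) * y + (d : ℝ) / ((c : ℝ) + (d : ℝ)) * z
      = ((c : ℝ) * y + (d : ℝ) * z) / ((c : ℝ) + (d : ℝ)) := by ring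
  rw [hA] at h
  have h2 := pow_le_pow_left₀ (by positivity) h (c + d)
  have hL : (y ^ ((c : ℝ) / ((c : ℝ) + (d : ℝ))) * z ^ ((d : ℝ) / ((c : ℝ) + (d : ℝ)))) ^ (c + d)
      = y ^ c * z ^ d := by
    rw [mul_pow]
    rw [← Real.rpow_natCast (y ^ ((c : ℝ) / ((c : ℝ) + (d : ℝ)))) (c + d),
      ← Real.rpow_natCast (z ^ ((d : ℝ) / ((c : ℝ) + (d : ℝ)))) (c + d)]
    rw [← Real.rpow_mul hy, ← Real.rpow_mul hz]
    have hcast : ((c + d : ℕ) : ℝ) = (c : ℝ) + (d : ℝ) := by push_cast; ring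
    rw [hcast, div_mul_cancel₀ _ (ne_of_gt hcd'), div_mul_cancel₀ _ (ne_of_gt hcd')]
    rw [Real.rpow_natCast, Real.rpow_natCast]
  rw [hL] at h2
  exact h2

lemma binom_core (p k r : ℕ) (hp : 0 < p) (hpk : p < k) (hkr : k ≤ r + 1) :
    ((r:ℝ) + 1) ^ k * ((r + 1 - k : ℕ) : ℝ) ^ p ≤ ((r + 1 - p : ℕ) : ℝ) ^ k * ((r:ℝ) + 1) ^ p := by
  have h := amgm_pow ((r:ℝ) + 1) (((r + 1 - k : ℕ) : ℝ)) (by positivity) (by positivity)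
    (k - p) p (by omega)
  have hAM : (((k - p : ℕ) : ℝ) * ((r:ℝ) + 1) + (p : ℝ) * ((r + 1 - k : ℕ) : ℝ))
      / (((k - p : ℕ) : ℝ) + (p : ℝ)) = ((r + 1 - p : ℕ) : ℝ) := by
    have e1 : ((k - p : ℕ) : ℝ) = (k : ℝ) - (p : ℝ) := by
      have := Nat.cast_sub (R := ℝ) (le_of_lt hpk); exact_mod_cast this
    have e2 : ((r + 1 - k : ℕ) : ℝ) = (r : ℝ) + 1 - (k : ℝ) := by
      have := Nat.cast_sub (R := ℝ) hkr; push_cast at this; exact_mod_cast this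
    have e3 : ((r + 1 - p : ℕ) : ℝ) = (r : ℝ) + 1 - (p : ℝ) := by
      have := Nat.cast_sub (R := ℝ) (by omega : p ≤ r + 1); push_cast at this
      exact_mod_cast this
    rw [e1, e2, e3]
    have hk0 : (0:ℝ) < (k : ℝ) := by exact_mod_cast (by omega : 0 < k)
    rw [sub_add_cancel]
    field_simp
    ring
  rw [hAM] at h
  have harr : k - p + p = k := by omega
  rw [harr] at h
  -- h : (r+1)^(k-p) * (↑(r+1-k))^p ≤ (↑(r+1-p))^k
  have hsplitpow : ((r:ℝ) + 1) ^ k = ((r:ℝ) + 1) ^ (k - p) * ((r:ℝ) + 1) ^ p := by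
    rw [← pow_add, harr]
  calc ((r:ℝ) + 1) ^ k * ((r + 1 - k : ℕ) : ℝ) ^ p
      = (((r:ℝ) + 1) ^ (k - p) * ((r + 1 - k : ℕ) : ℝ) ^ p) * ((r:ℝ) + 1) ^ p := by
        rw [hsplitpow]; ring
    _ ≤ ((r + 1 - p : ℕ) : ℝ) ^ k * ((r:ℝ) + 1) ^ p :=
        mul_le_mul_of_nonneg_right h (by positivity)

lemma binom_step (p k r : ℕ) (hp : 0 < p) (hpk : p < k) (hkr : k ≤ r + 1) :
    ((r+1).choose p : ℝ) ^ k * (r.choose k : ℝ) ^ p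
      ≤ (r.choose p : ℝ) ^ k * ((r+1).choose k : ℝ) ^ p := by
  rcases Nat.lt_or_ge r k with hk' | hk'
  · have hz : r.choose k = 0 := Nat.choose_eq_zero_of_lt hk'
    rw [hz]
    push_cast
    rw [zero_pow (by omega : p ≠ 0), mul_zero]
    positivity
  · have h1 : 0 < r + 1 - p := by omega
    have h2 : 0 < r + 1 - k := by omega
    have h1' : (0:ℝ) < ((r + 1 - p : ℕ) : ℝ) := by exact_mod_cast h1
    have h2' : (0:ℝ) < ((r + 1 - k : ℕ) : ℝ) := by exact_mod_cast h2
    have hpos : (0:ℝ) < ((r + 1 - p : ℕ) : ℝ) ^ k * ((r + 1 - k : ℕ) : ℝ) ^ p := by positivity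
    have hip := chooseId (r+1) p (by omega)
    rw [Nat.add_sub_cancel] at hip
    have idp : (((r + 1 - p : ℕ)) : ℝ) * (((r+1).choose p : ℕ) : ℝ)
        = ((r:ℝ) + 1) * ((r.choose p : ℕ) : ℝ) := by exact_mod_cast congrArg (Nat.cast (R := ℝ)) hip
    have hik := chooseId (r+1) k (by omega)
    rw [Nat.add_sub_cancel] at hik
    have idk : (((r + 1 - k : ℕ)) : ℝ) * (((r+1).choose k : ℕ) : ℝ)
        = ((r:ℝ) + 1) * ((r.choose k : ℕ) : ℝ) := by exact_mod_cast congrArg (Nat.cast (R := ℝ)) hik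
    have idpk : ((r + 1 - p : ℕ) : ℝ) ^ k * ((r+1).choose p : ℝ) ^ k
        = ((r:ℝ) + 1) ^ k * (r.choose p : ℝ) ^ k := by
      have h := congrArg (fun t : ℝ => t ^ k) idp
      simpa [mul_pow] using h
    have idkp : ((r + 1 - k : ℕ) : ℝ) ^ p * ((r+1).choose k : ℝ) ^ p
        = ((r:ℝ) + 1) ^ p * (r.choose k : ℝ) ^ p := by
      have h := congrArg (fun t : ℝ => t ^ p) idk
      simpa [mul_pow] using h
    have H : ((r+1).choose p : ℝ) ^ k * (r.choose k : ℝ) ^ p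
          * (((r + 1 - p : ℕ) : ℝ) ^ k * ((r + 1 - k : ℕ) : ℝ) ^ p)
        ≤ (r.choose p : ℝ) ^ k * ((r+1).choose k : ℝ) ^ p
          * (((r + 1 - p : ℕ) : ℝ) ^ k * ((r + 1 - k : ℕ) : ℝ) ^ p) := by
      calc ((r+1).choose p : ℝ) ^ k * (r.choose k : ℝ) ^ p
            * (((r + 1 - p : ℕ) : ℝ) ^ k * ((r + 1 - k : ℕ) : ℝ) ^ p)
          = (((r + 1 - p : ℕ) : ℝ) ^ k * ((r+1).choose p : ℝ) ^ k)
            * ((r.choose k : ℝ) ^ p * ((r + 1 - k : ℕ) : ℝ) ^ p) := by ring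
        _ = (((r:ℝ) + 1) ^ k * (r.choose p : ℝ) ^ k)
            * ((r.choose k : ℝ) ^ p * ((r + 1 - k : ℕ) : ℝ) ^ p) := by rw [idpk]
        _ = ((r.choose p : ℝ) ^ k * (r.choose k : ℝ) ^ p)
            * (((r:ℝ) + 1) ^ k * ((r + 1 - k : ℕ) : ℝ) ^ p) := by ring
        _ ≤ ((r.choose p : ℝ) ^ k * (r.choose k : ℝ) ^ p)
            * (((r + 1 - p : ℕ) : ℝ) ^ k * ((r:ℝ) + 1) ^ p) :=
            mul_le_mul_of_nonneg_left (binom_core p k r hp hpk hkr) (by positivity)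
        _ = ((r.choose p : ℝ) ^ k * ((r + 1 - p : ℕ) : ℝ) ^ k)
            * (((r:ℝ) + 1) ^ p * (r.choose k : ℝ) ^ p) := by ring
        _ = ((r.choose p : ℝ) ^ k * ((r + 1 - p : ℕ) : ℝ) ^ k)
            * (((r + 1 - k : ℕ) : ℝ) ^ p * ((r+1).choose k : ℝ) ^ p) := by rw [idkp]
        _ = (r.choose p : ℝ) ^ k * ((r+1).choose k : ℝ) ^ p
            * (((r + 1 - p : ℕ) : ℝ) ^ k * ((r + 1 - k : ℕ) : ℝ) ^ p) := by ring
    exact le_of_mul_le_mul_right H hpos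

lemma binom_mono (p k m r : ℕ) (hp : 0 < p) (hpk : p < k) (hkm : k ≤ m) (hmr : m ≤ r) :
    (r.choose p : ℝ) ^ k * (m.choose k : ℝ) ^ p ≤ (m.choose p : ℝ) ^ k * (r.choose k : ℝ) ^ p := by
  induction r, hmr using Nat.le_induction with
  | base => exact le_of_eq (by ring)
  | succ r hmr IH =>
    have hstep := binom_step p k r hp hpk (by omega)
    have hCrk : (0:ℝ) < (r.choose k : ℝ) ^ p := by
      have h := Nat.choose_pos (show k ≤ r by omega)
      have h' : (0:ℝ) < (r.choose k : ℝ) := by exact_mod_cast h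
      positivity
    have H : ((r+1).choose p : ℝ) ^ k * (m.choose k : ℝ) ^ p * (r.choose k : ℝ) ^ p
        ≤ (m.choose p : ℝ) ^ k * ((r+1).choose k : ℝ) ^ p * (r.choose k : ℝ) ^ p := by
      calc ((r+1).choose p : ℝ) ^ k * (m.choose k : ℝ) ^ p * (r.choose k : ℝ) ^ p
          = (((r+1).choose p : ℝ) ^ k * (r.choose k : ℝ) ^ p) * (m.choose k : ℝ) ^ p := by ring
        _ ≤ ((r.choose p : ℝ) ^ k * ((r+1).choose k : ℝ) ^ p) * (m.choose k : ℝ) ^ p :=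
            mul_le_mul_of_nonneg_right hstep (by positivity)
        _ = ((r.choose p : ℝ) ^ k * (m.choose k : ℝ) ^ p) * ((r+1).choose k : ℝ) ^ p := by ring
        _ ≤ ((m.choose p : ℝ) ^ k * (r.choose k : ℝ) ^ p) * ((r+1).choose k : ℝ) ^ p :=
            mul_le_mul_of_nonneg_right IH (by positivity)
        _ = (m.choose p : ℝ) ^ k * ((r+1).choose k : ℝ) ^ p * (r.choose k : ℝ) ^ p := by ring
    exact le_of_mul_le_mul_right H hCrk





variable {V : Type*} [DecidableEq V]

noncomputable def W (Δ : Finset (Finset V)) (x : V → ℝ) (j : ℕ) : ℝ :=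
  ∑ F ∈ Δ.filter (fun s => s.card = j), ∏ v ∈ F, x v

noncomputable def L (Δ : Finset (Finset V)) (x : V → ℝ) (j : ℕ) (u : V) : ℝ :=
  ∑ F ∈ Δ.filter (fun s => s.card = j ∧ u ∈ s), ∏ v ∈ F.erase u, x v

lemma W_nonneg (Δ : Finset (Finset V)) (x : V → ℝ) (j : ℕ) (hx : ∀ v, 0 ≤ x v) :
    0 ≤ W Δ x j :=
  Finset.sum_nonneg fun F _ => Finset.prod_nonneg fun v _ => hx v

lemma L_nonneg (Δ : Finset (Finset V)) (x : V → ℝ) (j : ℕ) (u : V) (hx : ∀ v, 0 ≤ x v) :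
    0 ≤ L Δ x j u :=
  Finset.sum_nonneg fun F _ => Finset.prod_nonneg fun v _ => hx v

lemma W_split (Δ : Finset (Finset V)) (x : V → ℝ) (j : ℕ) (u : V) :
    W Δ x j = (∑ F ∈ Δ.filter (fun s => s.card = j ∧ u ∉ s), ∏ v ∈ F, x v)
      + x u * L Δ x j u := by
  rw [W, L, ← Finset.sum_filter_add_sum_filter_not (Δ.filter (fun s => s.card = j))
      (fun s => u ∈ s), Finset.filter_filter, Finset.filter_filter, add_comm]
  congr 1
  rw [Finset.mul_sum]
  apply Finset.sum_congr rfl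
  intro F hF
  simp only [Finset.mem_filter] at hF
  exact (Finset.mul_prod_erase F x hF.2.2).symm

lemma L_update_self (Δ : Finset (Finset V)) (x : V → ℝ) (j : ℕ) (u : V) (c : ℝ) :
    L Δ (Function.update x u c) j u = L Δ x j u := by
  apply Finset.sum_congr rfl
  intro F _
  apply Finset.prod_congr rfl
  intro v hv
  exact Function.update_of_ne (Finset.ne_of_mem_erase hv) _ _

lemma L_update_other (Δ : Finset (Finset V)) (x : V → ℝ) (j : ℕ) (u v : V) (c : ℝ)
    (hno : ∀ F ∈ Δ, u ∈ F → v ∈ F → False) :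
    L Δ (Function.update x v c) j u = L Δ x j u := by
  apply Finset.sum_congr rfl
  intro F hF
  simp only [Finset.mem_filter] at hF
  apply Finset.prod_congr rfl
  intro w hw
  have hwF := Finset.mem_of_mem_erase hw
  have hwv : w ≠ v := fun h => hno F hF.1 hF.2.2 (h ▸ hwF)
  exact Function.update_of_ne hwv _ _

lemma W_update (Δ : Finset (Finset V)) (x : V → ℝ) (j : ℕ) (u : V) (c : ℝ) :
    W Δ (Function.update x u c) j = W Δ x j + (c - x u) * L Δ x j u := by
  rw [W_split Δ (Function.update x u c) j u, W_split Δ x j u]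
  have e1 : ∑ F ∈ Δ.filter (fun s => s.card = j ∧ u ∉ s), ∏ v ∈ F, (Function.update x u c) v
      = ∑ F ∈ Δ.filter (fun s => s.card = j ∧ u ∉ s), ∏ v ∈ F, x v := by
    apply Finset.sum_congr rfl
    intro F hF
    simp only [Finset.mem_filter] at hF
    apply Finset.prod_congr rfl
    intro v hv
    have hvu : v ≠ u := by
      rintro rfl
      exact hF.2.2 hv
    exact Function.update_of_ne hvu _ _
  rw [e1, L_update_self, Function.update_self]
  ring

lemma W_eq_esymm (Δ : Finset (Finset V)) (hΔ : ∀ B ∈ Δ, ∀ A ⊆ B, A ∈ Δ)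
    (x : V → ℝ) (T : Finset V) (hT : T ∈ Δ)
    (hsupp : ∀ v, x v ≠ 0 → v ∈ T) (j : ℕ) :
    W Δ x j = (T.val.map x).esymm j := by
  rw [Finset.esymm_map_val, W,
    ← Finset.sum_filter_add_sum_filter_not (Δ.filter (fun s => s.card = j)) (fun s => s ⊆ T)]
  have h2 : ∑ F ∈ (Δ.filter (fun s => s.card = j)).filter (fun s => ¬ s ⊆ T),
      ∏ v ∈ F, x v = 0 := by
    apply Finset.sum_eq_zero
    intro F hF
    simp only [Finset.mem_filter, Finset.not_subset] at hF
    obtain ⟨v, hvF, hvT⟩ := hF.2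
    have hx0 : x v = 0 := by
      by_contra h
      exact hvT (hsupp v h)
    exact Finset.prod_eq_zero hvF hx0
  rw [h2, add_zero]
  apply Finset.sum_congr
  · ext F
    simp only [Finset.mem_filter, Finset.mem_powersetCard]
    constructor
    · rintro ⟨⟨_, hcard⟩, hsub⟩
      exact ⟨hsub, hcard⟩
    · rintro ⟨hsub, hcard⟩
      exact ⟨⟨hΔ T hT F hsub, hcard⟩, hsub⟩
  · intros
    rfl

lemma shift_step (Δ : Finset (Finset V)) (x : V → ℝ) (hx : ∀ v, 0 ≤ x v) (k p : ℕ)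
    (u v : V) (huv : u ≠ v)
    (hno : ∀ F ∈ Δ, u ∈ F → v ∈ F → False)
    (hApos : 0 < L Δ x k u)
    (hD : L Δ x k v * L Δ x p u - L Δ x k u * L Δ x p v ≤ 0) :
    ∃ x' : V → ℝ, (∀ w, 0 ≤ x' w) ∧ (∀ w, x' w ≠ 0 → (x w ≠ 0 ∧ w ≠ v) ∨ w = u) ∧
      W Δ x' k = W Δ x k ∧ W Δ x' p ≤ W Δ x p := by
  set A := L Δ x k u with hA
  set B := L Δ x k v with hB
  set Pu := L Δ x p u with hPu
  set Pv := L Δ x p v with hPv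
  have hBnn : 0 ≤ B := L_nonneg Δ x k v hx
  have hPnn : 0 ≤ Pu := L_nonneg Δ x p u hx
  set c : ℝ := x u + x v * (B / A) with hc
  set x'' := Function.update x u c with hx''
  set x' := Function.update x'' v 0 with hx'
  have hno' : ∀ F ∈ Δ, v ∈ F → u ∈ F → False := fun F hF h1 h2 => hno F hF h2 h1
  -- k-count preserved
  have hWk'' : ∀ j : ℕ, W Δ x'' j = W Δ x j + (x v * (B / A)) * L Δ x j u := by
    intro j
    rw [hx'', W_update]
    rw [hc]
    ring
  have hLv'' : ∀ j : ℕ, L Δ x'' j v = L Δ x j v := by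
    intro j
    rw [hx'']
    exact L_update_other Δ x j v u c hno'
  have hWj' : ∀ j : ℕ, W Δ x' j = W Δ x j + (x v * (B / A)) * L Δ x j u - x v * L Δ x j v := by
    intro j
    rw [hx', W_update, hLv'', hWk'']
    have hxv'' : x'' v = x v := by
      rw [hx'']
      exact Function.update_of_ne (Ne.symm huv) _ _
    rw [hxv'']
    ring
  refine ⟨x', ?_, ?_, ?_, ?_⟩
  · intro w
    rw [hx']
    rcases eq_or_ne w v with hwv | hwv
    · rw [hwv, Function.update_self]
    · rw [Function.update_of_ne hwv, hx'']
      rcases eq_or_ne w u with hwu | hwu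
      · rw [hwu, Function.update_self, hc]
        have h0 : 0 ≤ x v * (B / A) := mul_nonneg (hx v) (div_nonneg hBnn (le_of_lt hApos))
        have h1 := hx u
        linarith
      · rw [Function.update_of_ne hwu]
        exact hx w
  · intro w hw
    rcases eq_or_ne w v with hwv | hwv
    · rw [hx', hwv, Function.update_self] at hw
      exact absurd rfl hw
    · rcases eq_or_ne w u with hwu | hwu
      · right; exact hwu
      · left
        rw [hx', Function.update_of_ne hwv, hx'', Function.update_of_ne hwu] at hw
        exact ⟨hw, hwv⟩
  · rw [hWj' k]
    have he : x v * (B / A) * A = x v * B := by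
      rw [mul_assoc, div_mul_cancel₀ _ (ne_of_gt hApos)]
    rw [he]
    ring
  · rw [hWj' p]
    have hterm : x v * (B / A) * Pu - x v * Pv = (x v / A) * (B * Pu - A * Pv) := by
      field_simp
    have hle : x v * (B / A) * Pu - x v * Pv ≤ 0 := by
      rw [hterm]
      exact mul_nonpos_of_nonneg_of_nonpos (div_nonneg (hx v) (le_of_lt hApos)) hD
    linarith


lemma key (Δ : Finset (Finset V)) (hΔ : ∀ B ∈ Δ, ∀ A ⊆ B, A ∈ Δ)
    (hflag : IsFlag Δ)
    (r k p : ℕ) (hpk : p < k) (hp : 0 < p)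
    (hdim1 : ∀ F ∈ Δ, F.card ≤ r) :
    ∀ (n : ℕ) (x : V → ℝ) (s : Finset V), (∀ v, 0 ≤ x v) → (∀ v, x v ≠ 0 → v ∈ s) →
      s.card ≤ n →
      (r.choose p : ℝ) ^ k * W Δ x k ^ p ≤ (r.choose k : ℝ) ^ p * W Δ x p ^ k := by
  intro n
  induction n with
  | zero =>
    intro x s hx hsupp hcard
    have hWk : W Δ x k = 0 := by
      apply Finset.sum_eq_zero
      intro F hF
      simp only [Finset.mem_filter] at hF
      have hFne : F.Nonempty := Finset.card_pos.mp (by omega)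
      obtain ⟨v, hv⟩ := hFne
      refine Finset.prod_eq_zero hv ?_
      by_contra h
      have hvs := hsupp v h
      have hse : s = ∅ := Finset.card_eq_zero.mp (by omega)
      rw [hse] at hvs
      exact absurd hvs (Finset.notMem_empty v)
    rw [hWk, zero_pow (by omega : p ≠ 0), mul_zero]
    exact mul_nonneg (by positivity) (pow_nonneg (W_nonneg Δ x p hx) k)
  | succ n IH =>
    intro x s hx hsupp hcard
    by_cases hWk : W Δ x k = 0
    · rw [hWk, zero_pow (by omega : p ≠ 0), mul_zero]
      exact mul_nonneg (by positivity) (pow_nonneg (W_nonneg Δ x p hx) k)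
    classical
    set T := s.filter (fun v => x v ≠ 0) with hTdef
    have hsuppT : ∀ v, x v ≠ 0 → v ∈ T := fun v hv =>
      Finset.mem_filter.mpr ⟨hsupp v hv, hv⟩
    have hTs : T ⊆ s := Finset.filter_subset _ _
    have hxT : ∀ v ∈ T, x v ≠ 0 := fun v hv => (Finset.mem_filter.mp hv).2
    have finish : ∀ (x' : V → ℝ) (w0 : V), w0 ∈ T → (∀ w, 0 ≤ x' w) →
        (∀ w, x' w ≠ 0 → w ∈ T.erase w0) → W Δ x' k = W Δ x k → W Δ x' p ≤ W Δ x p →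
        (r.choose p : ℝ) ^ k * W Δ x k ^ p ≤ (r.choose k : ℝ) ^ p * W Δ x p ^ k := by
      intro x' w0 hw0 hx'0 hsupp' hk' hp'
      have hcard' : (T.erase w0).card ≤ n := by
        have h1 : T.card ≤ s.card := Finset.card_le_card hTs
        have h2 := Finset.card_erase_of_mem hw0
        omega
      have hIH := IH x' (T.erase w0) hx'0 (fun v hv => hsupp' v hv) hcard'
      rw [hk'] at hIH
      calc (r.choose p : ℝ) ^ k * W Δ x k ^ p
          ≤ (r.choose k : ℝ) ^ p * W Δ x' p ^ k := hIH
        _ ≤ (r.choose k : ℝ) ^ p * W Δ x p ^ k := by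
            refine mul_le_mul_of_nonneg_left ?_ (by positivity)
            exact pow_le_pow_left₀ (W_nonneg Δ x' p hx'0) hp' k
    by_cases hA : ∃ u ∈ T, L Δ x k u = 0
    · obtain ⟨u, huT, hLu⟩ := hA
      refine finish (Function.update x u 0) u huT ?_ ?_ ?_ ?_
      · intro w
        rcases eq_or_ne w u with hwu | hwu
        · rw [hwu, Function.update_self]
        · rw [Function.update_of_ne hwu]; exact hx w
      · intro w hw
        rcases eq_or_ne w u with hwu | hwu
        · rw [hwu, Function.update_self] at hw; exact absurd rfl hw
        · rw [Function.update_of_ne hwu] at hw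
          exact Finset.mem_erase.mpr ⟨hwu, hsuppT w hw⟩
      · rw [W_update, hLu]; ring
      · rw [W_update]
        have h0 := mul_nonneg (hx u) (L_nonneg Δ x p u hx)
        nlinarith [h0]
    push_neg at hA
    by_cases hB : ∃ u ∈ T, ∃ v ∈ T, u ≠ v ∧ ({u, v} : Finset V) ∉ Δ
    · obtain ⟨u, huT, v, hvT, huv, hpair⟩ := hB
      have hno : ∀ F ∈ Δ, u ∈ F → v ∈ F → False := by
        intro F hF hu hv
        refine hpair (hΔ F hF {u, v} ?_)
        intro w hw
        rcases Finset.mem_insert.mp hw with hw' | hw'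
        · rw [hw']; exact hu
        · rw [Finset.mem_singleton.mp hw']; exact hv
      have hApos : 0 < L Δ x k u :=
        lt_of_le_of_ne (L_nonneg Δ x k u hx) (Ne.symm (hA u huT))
      have hBpos : 0 < L Δ x k v :=
        lt_of_le_of_ne (L_nonneg Δ x k v hx) (Ne.symm (hA v hvT))
      by_cases hD : L Δ x k v * L Δ x p u - L Δ x k u * L Δ x p v ≤ 0
      · obtain ⟨x', h0, hsupp', hk', hp'⟩ := shift_step Δ x hx k p u v huv hno hApos hD
        refine finish x' v hvT h0 ?_ hk' hp'
        intro w hw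
        rcases hsupp' w hw with ⟨hw1, hw2⟩ | hwu
        · exact Finset.mem_erase.mpr ⟨hw2, hsuppT w hw1⟩
        · rw [hwu]; exact Finset.mem_erase.mpr ⟨huv, huT⟩
      · have hD' : L Δ x k u * L Δ x p v - L Δ x k v * L Δ x p u ≤ 0 := by
          push_neg at hD
          linarith
        obtain ⟨x', h0, hsupp', hk', hp'⟩ := shift_step Δ x hx k p v u (Ne.symm huv)
          (fun F hF h1 h2 => hno F hF h2 h1) hBpos hD'
        refine finish x' u huT h0 ?_ hk' hp'
        intro w hw
        rcases hsupp' w hw with ⟨hw1, hw2⟩ | hwv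
        · exact Finset.mem_erase.mpr ⟨hw2, hsuppT w hw1⟩
        · rw [hwv]; exact Finset.mem_erase.mpr ⟨Ne.symm huv, hvT⟩
    push_neg at hB
    have hsing : ∀ u ∈ T, ({u} : Finset V) ∈ Δ := by
      intro u huT
      obtain ⟨F, hF, -⟩ := Finset.exists_ne_zero_of_sum_ne_zero (hA u huT)
      simp only [Finset.mem_filter] at hF
      exact hΔ F hF.1 {u} (Finset.singleton_subset_iff.mpr hF.2.2)
    have hTΔ : T ∈ Δ := hflag T hsing hB
    have hmr : T.card ≤ r := hdim1 T hTΔ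
    have hWp := W_eq_esymm Δ hΔ x T hTΔ hsuppT p
    have hWke := W_eq_esymm Δ hΔ x T hTΔ hsuppT k
    set M := T.val.map x with hM
    have hMcard : Multiset.card M = T.card := by rw [hM, Multiset.card_map]; rfl
    have hMpos : ∀ y ∈ M, 0 < y := by
      intro y hy
      rw [hM, Multiset.mem_map] at hy
      obtain ⟨v, hvT, rfl⟩ := hy
      exact lt_of_le_of_ne (hx v) (Ne.symm (hxT v hvT))
    have hkT : k ≤ T.card := by
      by_contra hcon
      push_neg at hcon
      apply hWk
      rw [hWke]
      exact esymm_of_lt (by rw [hMcard]; omega)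
    have hmac := maclaurin M hMpos p k hp (le_of_lt hpk) (by rw [hMcard]; exact hkT)
    rw [hMcard] at hmac
    have hmono := binom_mono p k T.card r hp hpk hkT hmr
    rw [hWp, hWke]
    have hek0 : 0 ≤ M.esymm k ^ p :=
      pow_nonneg (le_of_lt (esymm_pos hMpos (by rw [hMcard]; exact hkT))) p
    have hCmk : (0:ℝ) < ((T.card.choose k : ℕ) : ℝ) ^ p := by
      have h := Nat.choose_pos hkT
      have h' : (0:ℝ) < (T.card.choose k : ℝ) := by exact_mod_cast h
      positivity
    have H : (r.choose p : ℝ) ^ k * M.esymm k ^ p * ((T.card.choose k : ℕ) : ℝ) ^ p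
        ≤ (r.choose k : ℝ) ^ p * M.esymm p ^ k * ((T.card.choose k : ℕ) : ℝ) ^ p := by
      calc (r.choose p : ℝ) ^ k * M.esymm k ^ p * ((T.card.choose k : ℕ) : ℝ) ^ p
          = M.esymm k ^ p * ((r.choose p : ℝ) ^ k * (T.card.choose k : ℝ) ^ p) := by ring
        _ ≤ M.esymm k ^ p * ((T.card.choose p : ℝ) ^ k * (r.choose k : ℝ) ^ p) :=
            mul_le_mul_of_nonneg_left hmono hek0
        _ = (r.choose k : ℝ) ^ p * (M.esymm k ^ p * (T.card.choose p : ℝ) ^ k) := by ring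
        _ ≤ (r.choose k : ℝ) ^ p * (M.esymm p ^ k * (T.card.choose k : ℝ) ^ p) :=
            mul_le_mul_of_nonneg_left hmac (by positivity)
        _ = (r.choose k : ℝ) ^ p * M.esymm p ^ k * ((T.card.choose k : ℕ) : ℝ) ^ p := by ring
    exact le_of_mul_le_mul_right H hCmk

end FR

end

theorem stmt5 {V : Type*} [DecidableEq V] (Δ : Finset (Finset V))
    (hΔ : ∀ B ∈ Δ, ∀ A ⊆ B, A ∈ Δ)
    (hflag : IsFlag Δ)
    (r k p : ℕ) (hrk : k ≤ r) (hpk : p < k) (hp : 0 < p)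
    (hdim : (∀ F ∈ Δ, F.card ≤ r) ∧ (∃ F ∈ Δ, F.card = r)) :
    (faceCount Δ p : ℝ) ≥
      (r.choose p : ℝ) * (r.choose k : ℝ) ^ (-((p : ℝ) / (k : ℝ))) *
        (faceCount Δ k : ℝ) ^ ((p : ℝ) / (k : ℝ)) := by
  classical
  set s0 : Finset V := Δ.biUnion id with hs0
  set x : V → ℝ := fun v => if v ∈ s0 then 1 else 0 with hx
  have hx0 : ∀ v, 0 ≤ x v := by
    intro v
    rw [hx]
    dsimp only
    split <;> norm_num
  have hsupp : ∀ v, x v ≠ 0 → v ∈ s0 := by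
    intro v hv
    rw [hx] at hv
    dsimp only at hv
    by_contra h
    rw [if_neg h] at hv
    exact hv rfl
  have hWj : ∀ j, FR.W Δ x j = (faceCount Δ j : ℝ) := by
    intro j
    rw [FR.W, faceCount, Finset.card_eq_sum_ones]
    push_cast
    apply Finset.sum_congr rfl
    intro F hF
    simp only [Finset.mem_filter] at hF
    apply Finset.prod_eq_one
    intro v hv
    have hvs : v ∈ s0 := by
      rw [hs0]
      exact Finset.mem_biUnion.mpr ⟨F, hF.1, hv⟩
    rw [hx]
    dsimp only
    rw [if_pos hvs]
  have hkey := FR.key Δ hΔ hflag r k p hpk hp hdim.1 s0.card x s0 hx0 hsupp le_rfl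
  rw [hWj k, hWj p] at hkey
  set a : ℝ := (faceCount Δ p : ℝ) with ha
  set b : ℝ := (faceCount Δ k : ℝ) with hb
  set P : ℝ := (r.choose p : ℝ) with hP
  set K : ℝ := (r.choose k : ℝ) with hK
  have hPpos : 0 < P := by
    rw [hP]
    exact_mod_cast Nat.choose_pos (by omega : p ≤ r)
  have hKpos : 0 < K := by
    rw [hK]
    exact_mod_cast Nat.choose_pos hrk
  have ha0 : 0 ≤ a := by rw [ha]; positivity
  have hb0 : 0 ≤ b := by rw [hb]; positivity
  have hk0 : (0:ℝ) < (k:ℝ) := by exact_mod_cast (by omega : 0 < k)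
  rw [ge_iff_le]
  have key2 : (P ^ k * b ^ p) / K ^ p ≤ a ^ k := by
    rw [div_le_iff₀ (by positivity)]
    calc P ^ k * b ^ p ≤ K ^ p * a ^ k := hkey
      _ = a ^ k * K ^ p := by ring
  have hroot := Real.rpow_le_rpow (by positivity) key2 (by positivity : (0:ℝ) ≤ 1 / (k:ℝ))
  have hR : ((a ^ k : ℝ)) ^ ((1:ℝ)/(k:ℝ)) = a := by
    rw [← Real.rpow_natCast a k, ← Real.rpow_mul ha0, mul_one_div,
      div_self (ne_of_gt hk0), Real.rpow_one]
  have hL : ((P ^ k * b ^ p) / K ^ p) ^ ((1:ℝ)/(k:ℝ))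
      = P * b ^ ((p:ℝ)/(k:ℝ)) * (K ^ ((p:ℝ)/(k:ℝ)))⁻¹ := by
    rw [Real.div_rpow (by positivity) (by positivity)]
    rw [Real.mul_rpow (by positivity) (by positivity)]
    rw [← Real.rpow_natCast P k, ← Real.rpow_mul (le_of_lt hPpos), mul_one_div,
      div_self (ne_of_gt hk0), Real.rpow_one]
    rw [← Real.rpow_natCast b p, ← Real.rpow_mul hb0, mul_one_div]
    rw [← Real.rpow_natCast K p, ← Real.rpow_mul (le_of_lt hKpos), mul_one_div]
    rw [div_eq_mul_inv]
  rw [hR, hL] at hroot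
  rw [Real.rpow_neg (le_of_lt hKpos)]
  calc P * (K ^ ((p:ℝ)/(k:ℝ)))⁻¹ * b ^ ((p:ℝ)/(k:ℝ))
      = P * b ^ ((p:ℝ)/(k:ℝ)) * (K ^ ((p:ℝ)/(k:ℝ)))⁻¹ := by ring
    _ ≤ a := hroot
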